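/- Let S be a finite set of n elements and let <₁, …, <_ℓ be ℓ total (linear) orderings on S. Then there exists a subset S' ⊆ S of size at least n^(1/2^(ℓ−1)) and an enumeration S' = {s_1, s_2, …, s_t} such that, in this enumeration, S' forms an increasing chain in <₁ and, for every i ∈ {2, …, ℓ}, S' forms either an increasing chain or a decreasing chain in <_i. -/

import Mathlib

open Function Finset

/-- Classic Erdős–Szekeres (copied from the Mathlib archive). -/
private theorem es_classic {α : Type*} [LinearOrder α] {r s n : ℕ} {f : Fin n → α}
    (hn : r * s < n) (hf : Injective f) :
    (∃ t : Finset (Fin n), r < #t ∧ StrictMonoOn f ↑t) ∨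
      ∃ t : Finset (Fin n), s < #t ∧ StrictAntiOn f ↑t := by
  let inc_sequences_ending_in : Fin n → Finset (Finset (Fin n)) := fun i =>
    univ.powerset.filter fun t => Finset.max t = i ∧ StrictMonoOn f ↑t
  let dec_sequences_ending_in : Fin n → Finset (Finset (Fin n)) := fun i =>
    univ.powerset.filter fun t => Finset.max t = i ∧ StrictAntiOn f ↑t
  have inc_i : ∀ i, {i} ∈ inc_sequences_ending_in i := fun i => by
    simp [inc_sequences_ending_in, StrictMonoOn]
  have dec_i : ∀ i, {i} ∈ dec_sequences_ending_in i := fun i => by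
    simp [dec_sequences_ending_in, StrictAntiOn]
  let ab' : Fin n → ℕ × ℕ := by
    intro i
    apply
      (max' ((inc_sequences_ending_in i).image card) (Nonempty.image ⟨{i}, inc_i i⟩ _),
        max' ((dec_sequences_ending_in i).image card) (Nonempty.image ⟨{i}, dec_i i⟩ _))
  generalize hab : ab' = ab
  rsuffices ⟨i, hi⟩ : ∃ i, r < (ab i).1 ∨ s < (ab i).2
  · refine Or.imp ?_ ?_ hi
    on_goal 1 =>
      have : (ab i).1 ∈ image card (inc_sequences_ending_in i) := by
        simp only [← hab]; exact max'_mem _ (Nonempty.image ⟨{i}, inc_i i⟩ _)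
    on_goal 2 =>
      have : (ab i).2 ∈ image card (dec_sequences_ending_in i) := by
        simp only [← hab]; exact max'_mem _ (Nonempty.image ⟨{i}, dec_i i⟩ _)
    all_goals
      intro hi
      rw [mem_image] at this
      obtain ⟨t, ht₁, ht₂⟩ := this
      refine ⟨t, by rwa [ht₂], ?_⟩
      rw [mem_filter] at ht₁
      apply ht₁.2.2
  have : Injective ab := by
    simp only [← hab]
    apply Function.Injective.of_lt_imp_ne
    intro i j k q
    injection q with q₁ q₂
    cases lt_or_gt_of_ne fun _ => ne_of_lt ‹i < j› (hf ‹f i = f j›)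
    on_goal 1 =>
      apply ne_of_lt _ q₁
      have : (ab' i).1 ∈ image card (inc_sequences_ending_in i) := by exact max'_mem _ (Nonempty.image ⟨{i}, inc_i i⟩ _)
    on_goal 2 =>
      apply ne_of_lt _ q₂
      have : (ab' i).2 ∈ image card (dec_sequences_ending_in i) := by exact max'_mem _ (Nonempty.image ⟨{i}, dec_i i⟩ _)
    all_goals
      rw [Nat.lt_iff_add_one_le]
      apply le_max'
      rw [mem_image] at this ⊢
      rcases this with ⟨t, ht₁, ht₂⟩
      rw [mem_filter] at ht₁
      have : t.max = i := by simp only [ht₁.2.1]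
      refine ⟨insert j t, ?_, ?_⟩
      · rw [mem_filter]
        refine ⟨?_, ?_, ?_⟩
        · rw [mem_powerset]; apply subset_univ
        · convert max_insert (a := j) (s := t)
          rw [ht₁.2.1, max_eq_left]
          apply WithBot.coe_le_coe.mpr (le_of_lt ‹i < j›)
        simp only [StrictMonoOn, StrictAntiOn, coe_insert, Set.mem_insert_iff, mem_coe]
        rintro x ⟨rfl | _⟩ y ⟨rfl | _⟩ _
        · apply (irrefl _ ‹j < j›).elim
        · exfalso
          apply not_le_of_gt (_root_.trans ‹i < j› ‹j < y›) (le_max_of_eq ‹y ∈ t› ‹t.max = i›)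
        · first
          | apply lt_of_le_of_lt _ ‹f i < f j›
          | apply lt_of_lt_of_le ‹f j < f i› _
          rcases lt_or_eq_of_le (le_max_of_eq ‹x ∈ t› ‹t.max = i›) with (_ | rfl)
          · apply le_of_lt (ht₁.2.2 ‹x ∈ t› (mem_of_max ‹t.max = i›) ‹x < i›)
          · rfl
        · apply ht₁.2.2 ‹x ∈ t› ‹y ∈ t› ‹x < y›
      · rw [card_insert_of_notMem, ht₂]
        intro
        apply not_le_of_gt ‹i < j› (le_max_of_eq ‹j ∈ t› ‹t.max = i›)
  by_contra! q
  let ran : Finset (ℕ × ℕ) := (range r).image Nat.succ ×ˢ (range s).image Nat.succ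
  have : image ab univ ⊆ ran := by
    rintro ⟨x₁, x₂⟩
    simp only [ran, mem_image, exists_prop, mem_range, mem_univ, mem_product, true_and,
      Prod.ext_iff]
    rintro ⟨i, rfl, rfl⟩
    specialize q i
    have z : 1 ≤ (ab i).1 ∧ 1 ≤ (ab i).2 := by
      simp only [← hab]
      constructor <;>
        · apply le_max'
          rw [mem_image]
          exact ⟨{i}, by solve_by_elim, card_singleton i⟩
    exact ⟨⟨(ab i).1 - 1, by omega⟩, (ab i).2 - 1, by omega⟩
  apply not_le_of_gt hn
  simpa [ran, Nat.succ_injective, card_image_of_injective, ‹Injective ab›] using card_le_card this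

theorem erdos_szekeres_multi_order {α : Type} (S : Finset α) (ℓ : ℕ) (hℓ : 0 < ℓ)
    (r : Fin ℓ → S → S → Prop) (hr : ∀ i, IsStrictTotalOrder S (r i)) :
    ∃ (t : ℕ) (s : Fin t → S),
      (S.card : ℝ) ^ ((1 : ℝ) / 2 ^ (ℓ - 1)) ≤ (t : ℝ) ∧
      Function.Injective s ∧
      (∀ i j : Fin t, i < j → r ⟨0, hℓ⟩ (s i) (s j)) ∧
      (∀ m : Fin ℓ,
        (∀ i j : Fin t, i < j → r m (s i) (s j)) ∨
        (∀ i j : Fin t, i < j → r m (s j) (s i))) := by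
  induction ℓ with
  | zero => exact absurd hℓ (lt_irrefl 0)
  | succ n ih =>
    rcases Nat.eq_zero_or_pos n with rfl | hn
    · -- base case ℓ = 1
      haveI := hr ⟨0, hℓ⟩
      letI : LinearOrder S := @linearOrderOfSTO S (r ⟨0, hℓ⟩) _ (Classical.decRel _)
      let e := monoEquivOfFin S (Fintype.card_coe S)
      refine ⟨S.card, e, by simp, e.injective, ?_, ?_⟩
      · intro i j hij
        exact e.strictMono hij
      · intro m
        have hm : m = ⟨0, hℓ⟩ := Fin.ext (by omega)
        subst hm
        exact Or.inl fun i j hij => e.strictMono hij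
    · -- step case: ℓ = n + 1 with n ≥ 1
      obtain ⟨t, s, ht, hsinj, hfirst, hmono⟩ :=
        ih hn (fun i => r i.castSucc) (fun i => hr _)
      rcases Nat.eq_zero_or_pos t with rfl | htpos
      · -- then S.card must be 0
        have h0 : (S.card : ℝ) = 0 := by
          by_contra h
          have hpos : (0 : ℝ) < S.card :=
            lt_of_le_of_ne (Nat.cast_nonneg _) (Ne.symm h)
          have := Real.rpow_pos_of_pos hpos ((1 : ℝ) / 2 ^ (n - 1))
          simp only [Nat.cast_zero] at ht
          linarith
        refine ⟨0, fun i => i.elim0, ?_, fun i => i.elim0, fun i => i.elim0,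
          fun m => Or.inl fun i => i.elim0⟩
        rw [h0, Real.zero_rpow (by positivity)]
        simp
      · haveI := hr (Fin.last n)
        letI : LinearOrder S := @linearOrderOfSTO S (r (Fin.last n)) _ (Classical.decRel _)
        set k := Nat.sqrt (t - 1) with hkdef
        have hkk : k * k < t := by
          have := Nat.sqrt_le (t - 1); rw [← hkdef] at this; omega
        have hkk2 : t ≤ (k + 1) * (k + 1) := by
          have := Nat.lt_succ_sqrt (t - 1)
          simp only [Nat.succ_eq_add_one] at this
          rw [← hkdef] at this
          omega
        obtain ⟨T, hT, hdir⟩ :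
            ∃ T : Finset (Fin t), k < T.card ∧ (StrictMonoOn s ↑T ∨ StrictAntiOn s ↑T) := by
          rcases es_classic hkk hsinj with ⟨T, h1, h2⟩ | ⟨T, h1, h2⟩
          exacts [⟨T, h1, Or.inl h2⟩, ⟨T, h1, Or.inr h2⟩]
        let e := T.orderIsoOfFin rfl
        have hidx : ∀ {i j : Fin T.card}, i < j → ((e i : Fin t) < (e j : Fin t)) :=
          fun h => e.strictMono h
        refine ⟨T.card, fun j => s (e j), ?_, ?_, ?_, ?_⟩
        · -- the cardinality bound
          have hx : (0 : ℝ) ≤ (S.card : ℝ) := Nat.cast_nonneg _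
          have e1 : ((1 : ℝ) / 2 ^ (n - 1)) * ((1 : ℝ) / 2) = (1 : ℝ) / 2 ^ (n + 1 - 1) := by
            rw [div_mul_div_comm, one_mul]
            congr 1
            rw [← pow_succ]
            congr 1
            omega
          calc (S.card : ℝ) ^ ((1 : ℝ) / 2 ^ (n + 1 - 1))
              = ((S.card : ℝ) ^ ((1 : ℝ) / 2 ^ (n - 1))) ^ ((1 : ℝ) / 2) := by
                rw [← Real.rpow_mul hx, e1]
            _ ≤ (t : ℝ) ^ ((1 : ℝ) / 2) := by
                apply Real.rpow_le_rpow (Real.rpow_nonneg hx _) ht (by norm_num)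
            _ ≤ ((k : ℝ) + 1) := by
                have h1 : (t : ℝ) ≤ ((k : ℝ) + 1) ^ (2 : ℕ) := by
                  rw [sq]
                  exact_mod_cast hkk2
                have h2 : (0 : ℝ) ≤ (k : ℝ) + 1 := by positivity
                calc (t : ℝ) ^ ((1 : ℝ) / 2)
                    ≤ (((k : ℝ) + 1) ^ (2 : ℕ)) ^ ((1 : ℝ) / 2) :=
                      Real.rpow_le_rpow (Nat.cast_nonneg _) h1 (by norm_num)
                  _ = ((k : ℝ) + 1) := by
                      rw [← Real.rpow_natCast ((k : ℝ) + 1) 2, ← Real.rpow_mul h2]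
                      norm_num
            _ ≤ (T.card : ℝ) := by exact_mod_cast hT
        · -- injectivity
          intro a b hab
          exact e.injective (Subtype.val_injective (hsinj hab))
        · -- increasing in the first order
          intro i j hij
          exact hfirst (e i) (e j) (hidx hij)
        · -- each order: monotone one way or the other
          rintro ⟨mv, hm⟩
          rcases Nat.lt_or_ge mv n with hmv | hmv
          · rcases hmono ⟨mv, hmv⟩ with hc | hc
            · exact Or.inl fun i j hij => hc (e i) (e j) (hidx hij)
            · exact Or.inr fun i j hij => hc (e i) (e j) (hidx hij)
          · have hlast : (⟨mv, hm⟩ : Fin (n + 1)) = Fin.last n := Fin.ext (by simp; omega)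
            rw [hlast]
            rcases hdir with hc | hc
            · exact Or.inl fun i j hij => hc (e i).2 (e j).2 (hidx hij)
            · exact Or.inr fun i j hij => hc (e i).2 (e j).2 (hidx hij)
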